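/- Fix n ≥ 1, masses m₀,…,mₙ > 0, ω > 0 and ν > 0. Let xⱼ = (uⱼ, zⱼ) : ℝ → ℂ × ℝ, j = 0,…,n, be C², 2π-periodic paths with xⱼ(t) ≠ xᵢ(t) for all t and all i ≠ j. Define the n-body bifurcation map componentwise by fⱼ(t) = ( −ν²·mⱼ·üⱼ − 2ν·mⱼ·√ω·i·u̇ⱼ + ω·mⱼ·uⱼ − ∑_{i≠j} mᵢ·mⱼ·(uⱼ − uᵢ)/r_{ij}³ , −ν²·mⱼ·z̈ⱼ − ∑_{i≠j} mᵢ·mⱼ·(zⱼ − zᵢ)/r_{ij}³ ), where r_{ij}(t) = (|uⱼ(t) − uᵢ(t)|² + (zⱼ(t) − zᵢ(t))²)^{1/2}. Then f is orthogonal to the infinitesimal generator of rotations: ∑_{j=0}^{n} ∫₀^{2π} Re( (−ν²·mⱼ·üⱼ(t) − 2ν·mⱼ·√ω·i·u̇ⱼ(t) + ω·mⱼ·uⱼ(t) − ∑_{i≠j} mᵢ·mⱼ·(uⱼ(t) − uᵢ(t))/r_{ij}(t)³) · conj(−i·uⱼ(t)) ) dt = 0. -/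

import Mathlib

open Finset

private lemma nbody_aux_antisymm {N : ℕ} (F : Fin N → Fin N → ℝ)
    (h : ∀ i j, F i j = - F j i) :
    ∑ j : Fin N, ∑ i ∈ Finset.univ.erase j, F i j = 0 := by
  set g : Fin N → Fin N → ℝ := fun i j => if i ≠ j then F i j else 0 with hgdef
  have hg : ∀ j : Fin N, ∑ i ∈ Finset.univ.erase j, F i j = ∑ i : Fin N, g i j := by
    intro j
    rw [hgdef, ← Finset.sum_filter]
    congr 1
    ext i
    simp [Finset.mem_erase, Finset.mem_filter, and_comm]
  have h1 : ∑ j : Fin N, ∑ i ∈ Finset.univ.erase j, F i j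
      = ∑ j : Fin N, ∑ i : Fin N, g i j := Finset.sum_congr rfl fun j _ => hg j
  have h2 : (∑ i : Fin N, ∑ j : Fin N, g i j) + (∑ j : Fin N, ∑ i : Fin N, g i j) = 0 := by
    rw [← Finset.sum_add_distrib]
    refine Finset.sum_eq_zero fun a _ => ?_
    rw [← Finset.sum_add_distrib]
    refine Finset.sum_eq_zero fun b _ => ?_
    by_cases hab : a = b
    · simp [hgdef, hab]
    · have hba : b ≠ a := fun h' => hab h'.symm
      simp [hgdef, hab, hba, h a b]
  have h3 : (∑ i : Fin N, ∑ j : Fin N, g i j) = ∑ j : Fin N, ∑ i : Fin N, g i j :=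
    Finset.sum_comm
  rw [h3] at h2
  rw [h1]
  linarith

private lemma nbody_aux_pair (M1 M2 ρ : ℝ) (p q : ℂ) :
    (((M1:ℂ) * (M2:ℂ) * (p - q)) / ((ρ:ℂ)) ^ 3 * (starRingEnd ℂ) (-(Complex.I * p))).re
      = -((((M2:ℂ) * (M1:ℂ) * (q - p)) / ((ρ:ℂ)) ^ 3 * (starRingEnd ℂ) (-(Complex.I * q))).re) := by
  rcases eq_or_ne ρ 0 with h | h
  · simp [h]
  · simp only [Complex.div_re, Complex.mul_re, Complex.mul_im, Complex.normSq_apply,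
      Complex.sub_re, Complex.sub_im, Complex.conj_re, Complex.conj_im,
      ← Complex.ofReal_pow, Complex.ofReal_re, Complex.ofReal_im, Complex.I_re, Complex.I_im,
      Complex.neg_re, Complex.neg_im, Complex.div_im]
    field_simp
    ring

private lemma nbody_aux_main (ν0 m0 ω0 s : ℝ) (a b c : ℂ) :
    ((-(ν0:ℂ)^2*(m0:ℂ)*c - 2*(ν0:ℂ)*(m0:ℂ)*((s:ℂ)*(Complex.I*b)) + (ω0:ℂ)*(m0:ℂ)*a)
        * (starRingEnd ℂ) (-(Complex.I*a))).re
      = ν0^2*m0*((c*(starRingEnd ℂ) a + b*(starRingEnd ℂ) b).im)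
        + ν0*s*m0*((b*(starRingEnd ℂ) a + a*(starRingEnd ℂ) b).re) := by
  simp [Complex.mul_re, Complex.mul_im, Complex.add_re, Complex.add_im, Complex.sub_re,
    Complex.sub_im, Complex.conj_re, Complex.conj_im, ← Complex.ofReal_pow,
    Complex.ofReal_re, Complex.ofReal_im]
  ring

private lemma nbody_aux_periodic_deriv (f : ℝ → ℂ) (c : ℝ) (h : Function.Periodic f c) :
    Function.Periodic (deriv f) c := by
  intro t
  have e : (fun s => f (s + c)) = f := funext h
  rw [← deriv_comp_add_const f c t, e]

theorem nbody_map_orthogonal_to_rotations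
    (n : ℕ) (hn : 1 ≤ n) (m : Fin (n + 1) → ℝ) (hm : ∀ j, 0 < m j)
    (ω ν : ℝ) (hω : 0 < ω) (hν : 0 < ν)
    (u : Fin (n + 1) → ℝ → ℂ) (z : Fin (n + 1) → ℝ → ℝ)
    (hu : ∀ j, ContDiff ℝ 2 (u j)) (hz : ∀ j, ContDiff ℝ 2 (z j))
    (hup : ∀ j, Function.Periodic (u j) (2 * Real.pi))
    (hzp : ∀ j, Function.Periodic (z j) (2 * Real.pi))
    (hcol : ∀ t : ℝ, ∀ i j : Fin (n + 1), i ≠ j → (u j t, z j t) ≠ (u i t, z i t))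
    (r : Fin (n + 1) → Fin (n + 1) → ℝ → ℝ)
    (hr : ∀ i j t, r i j t =
      Real.sqrt (‖u j t - u i t‖ ^ 2 + (z j t - z i t) ^ 2)) :
    ∑ j : Fin (n + 1), ∫ t in (0 : ℝ)..(2 * Real.pi),
        ((-(ν : ℂ) ^ 2 * (m j : ℂ) * deriv (deriv (u j)) t
            - 2 * (ν : ℂ) * (m j : ℂ) * ((Real.sqrt ω : ℂ) * (Complex.I * deriv (u j) t))
            + (ω : ℂ) * (m j : ℂ) * u j t
            - ∑ i ∈ Finset.univ.erase j,
                ((m i : ℂ) * (m j : ℂ) * (u j t - u i t)) / ((r i j t : ℂ)) ^ 3)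
          * (starRingEnd ℂ) (-(Complex.I * u j t))).re = 0 := by
  -- differentiability/continuity facts
  have hreg : ∀ j, Differentiable ℝ (u j) ∧ Differentiable ℝ (deriv (u j)) ∧
      Continuous (deriv (deriv (u j))) := by
    intro j
    have h := hu j
    rw [show (2 : WithTop ℕ∞) = 1 + 1 from rfl, contDiff_succ_iff_deriv] at h
    exact ⟨h.1, h.2.2.differentiable one_ne_zero, h.2.2.continuous_deriv le_rfl⟩
  have hc0 : ∀ j, Continuous (u j) := fun j => (hu j).continuous
  have hc1 : ∀ j, Continuous (deriv (u j)) := fun j => ((hreg j).2.1).continuous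
  have hc2 : ∀ j, Continuous (deriv (deriv (u j))) := fun j => (hreg j).2.2
  -- positivity of r off the diagonal
  have hrpos : ∀ (i j : Fin (n + 1)), i ≠ j → ∀ t, 0 < r i j t := by
    intro i j hij t
    rw [hr]
    apply Real.sqrt_pos.mpr
    rcases eq_or_lt_of_le (by positivity :
        (0:ℝ) ≤ ‖u j t - u i t‖ ^ 2 + (z j t - z i t) ^ 2) with he | h
    · exfalso
      apply hcol t i j hij
      have hA : ‖u j t - u i t‖ ^ 2 = 0 := by nlinarith [sq_nonneg (z j t - z i t)]
      have hB : (z j t - z i t) ^ 2 = 0 := by nlinarith [sq_nonneg (‖u j t - u i t‖)]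
      have h1 : u j t = u i t := by
        have := pow_eq_zero_iff (n := 2) (by norm_num) |>.mp hA
        rw [norm_eq_zero, sub_eq_zero] at this
        exact this
      have h2 : z j t = z i t := by
        have := pow_eq_zero_iff (n := 2) (by norm_num) |>.mp hB
        rw [sub_eq_zero] at this
        exact this
      rw [h1, h2]
    · exact h
  -- symmetry of r
  have hrsymm : ∀ (i j : Fin (n + 1)) (t : ℝ), r i j t = r j i t := by
    intro i j t
    rw [hr, hr]
    congr 1
    rw [show u j t - u i t = -(u i t - u j t) by ring, norm_neg]
    ring
  -- continuity of r
  have hcr : ∀ (i j : Fin (n + 1)), Continuous (r i j) := by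
    intro i j
    have : r i j = fun t => Real.sqrt (‖u j t - u i t‖ ^ 2 + (z j t - z i t) ^ 2) :=
      funext (hr i j)
    rw [this]
    exact Real.continuous_sqrt.comp
      (((continuous_norm.comp ((hc0 j).sub (hc0 i))).pow 2).add
        (((hz j).continuous.sub (hz i).continuous).pow 2))
  -- continuity of the integrand
  have hFcont : ∀ j : Fin (n + 1), Continuous (fun t =>
      ((-(ν : ℂ) ^ 2 * (m j : ℂ) * deriv (deriv (u j)) t
            - 2 * (ν : ℂ) * (m j : ℂ) * ((Real.sqrt ω : ℂ) * (Complex.I * deriv (u j) t))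
            + (ω : ℂ) * (m j : ℂ) * u j t
            - ∑ i ∈ Finset.univ.erase j,
                ((m i : ℂ) * (m j : ℂ) * (u j t - u i t)) / ((r i j t : ℂ)) ^ 3)
          * (starRingEnd ℂ) (-(Complex.I * u j t))).re) := by
    intro j
    apply Complex.continuous_re.comp
    apply Continuous.mul
    · apply Continuous.sub
      · apply Continuous.add
        · apply Continuous.sub
          · exact continuous_const.mul (hc2 j)
          · exact continuous_const.mul (continuous_const.mul (continuous_const.mul (hc1 j)))
        · exact continuous_const.mul (hc0 j)
      · apply continuous_finset_sum
        intro i hi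
        have hij : i ≠ j := Finset.ne_of_mem_erase hi
        apply Continuous.div
        · exact continuous_const.mul ((hc0 j).sub (hc0 i))
        · exact (Complex.continuous_ofReal.comp (hcr i j)).pow 3
        · intro t
          exact pow_ne_zero _ (Complex.ofReal_ne_zero.mpr (hrpos i j hij t).ne')
    · exact Complex.continuous_conj.comp (continuous_const.mul (hc0 j)).neg
  -- the potential-like function whose derivative is the summed integrand
  set G : ℝ → ℝ := fun t => ∑ j : Fin (n + 1),
      (ν^2 * m j * ((deriv (u j) t * (starRingEnd ℂ) (u j t)).im)
        + ν * Real.sqrt ω * m j * ((u j t * (starRingEnd ℂ) (u j t)).re)) with hGdef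
  -- pointwise identity
  have hpt : ∀ t : ℝ,
      (∑ j : Fin (n + 1),
        ((-(ν : ℂ) ^ 2 * (m j : ℂ) * deriv (deriv (u j)) t
            - 2 * (ν : ℂ) * (m j : ℂ) * ((Real.sqrt ω : ℂ) * (Complex.I * deriv (u j) t))
            + (ω : ℂ) * (m j : ℂ) * u j t
            - ∑ i ∈ Finset.univ.erase j,
                ((m i : ℂ) * (m j : ℂ) * (u j t - u i t)) / ((r i j t : ℂ)) ^ 3)
          * (starRingEnd ℂ) (-(Complex.I * u j t))).re)
      = ∑ j : Fin (n + 1),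
        (ν^2 * m j * ((deriv (deriv (u j)) t * (starRingEnd ℂ) (u j t)
            + deriv (u j) t * (starRingEnd ℂ) (deriv (u j) t)).im)
          + ν * Real.sqrt ω * m j * ((deriv (u j) t * (starRingEnd ℂ) (u j t)
            + u j t * (starRingEnd ℂ) (deriv (u j) t)).re)) := by
    intro t
    have split : ∀ j : Fin (n + 1),
        ((-(ν : ℂ) ^ 2 * (m j : ℂ) * deriv (deriv (u j)) t
            - 2 * (ν : ℂ) * (m j : ℂ) * ((Real.sqrt ω : ℂ) * (Complex.I * deriv (u j) t))
            + (ω : ℂ) * (m j : ℂ) * u j t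
            - ∑ i ∈ Finset.univ.erase j,
                ((m i : ℂ) * (m j : ℂ) * (u j t - u i t)) / ((r i j t : ℂ)) ^ 3)
          * (starRingEnd ℂ) (-(Complex.I * u j t))).re
        = ((-(ν : ℂ) ^ 2 * (m j : ℂ) * deriv (deriv (u j)) t
            - 2 * (ν : ℂ) * (m j : ℂ) * ((Real.sqrt ω : ℂ) * (Complex.I * deriv (u j) t))
            + (ω : ℂ) * (m j : ℂ) * u j t)
            * (starRingEnd ℂ) (-(Complex.I * u j t))).re
          - ∑ i ∈ Finset.univ.erase j,
            ((((m i : ℂ) * (m j : ℂ) * (u j t - u i t)) / ((r i j t : ℂ)) ^ 3)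
              * (starRingEnd ℂ) (-(Complex.I * u j t))).re := by
      intro j
      rw [sub_mul, Complex.sub_re, Finset.sum_mul, Complex.re_sum]
    rw [Finset.sum_congr rfl (fun j _ => split j), Finset.sum_sub_distrib]
    have hzero : ∑ j : Fin (n + 1), ∑ i ∈ Finset.univ.erase j,
        ((((m i : ℂ) * (m j : ℂ) * (u j t - u i t)) / ((r i j t : ℂ)) ^ 3)
          * (starRingEnd ℂ) (-(Complex.I * u j t))).re = 0 := by
      apply nbody_aux_antisymm
      intro i j
      rw [hrsymm i j t]
      exact nbody_aux_pair (m i) (m j) (r j i t) (u j t) (u i t)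
    rw [hzero, sub_zero]
    exact Finset.sum_congr rfl fun j _ =>
      nbody_aux_main ν (m j) ω (Real.sqrt ω) (u j t) (deriv (u j) t) (deriv (deriv (u j)) t)
  -- G has the summed integrand as derivative
  have hG : ∀ t : ℝ, HasDerivAt G
      (∑ j : Fin (n + 1),
        ((-(ν : ℂ) ^ 2 * (m j : ℂ) * deriv (deriv (u j)) t
            - 2 * (ν : ℂ) * (m j : ℂ) * ((Real.sqrt ω : ℂ) * (Complex.I * deriv (u j) t))
            + (ω : ℂ) * (m j : ℂ) * u j t
            - ∑ i ∈ Finset.univ.erase j,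
                ((m i : ℂ) * (m j : ℂ) * (u j t - u i t)) / ((r i j t : ℂ)) ^ 3)
          * (starRingEnd ℂ) (-(Complex.I * u j t))).re) t := by
    intro t
    rw [hpt t]
    apply HasDerivAt.fun_sum
    intro j _
    have ha : HasDerivAt (u j) (deriv (u j) t) t := ((hreg j).1 t).hasDerivAt
    have hb : HasDerivAt (deriv (u j)) (deriv (deriv (u j)) t) t := ((hreg j).2.1 t).hasDerivAt
    have h1 : HasDerivAt (fun t => deriv (u j) t * (starRingEnd ℂ) (u j t))
        (deriv (deriv (u j)) t * (starRingEnd ℂ) (u j t)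
          + deriv (u j) t * (starRingEnd ℂ) (deriv (u j) t)) t := hb.mul ha.star
    have h2 : HasDerivAt (fun t => u j t * (starRingEnd ℂ) (u j t))
        (deriv (u j) t * (starRingEnd ℂ) (u j t)
          + u j t * (starRingEnd ℂ) (deriv (u j) t)) t := ha.mul ha.star
    have him : HasDerivAt (fun t => (deriv (u j) t * (starRingEnd ℂ) (u j t)).im)
        ((deriv (deriv (u j)) t * (starRingEnd ℂ) (u j t)
          + deriv (u j) t * (starRingEnd ℂ) (deriv (u j) t)).im) t :=
      Complex.imCLM.hasFDerivAt.comp_hasDerivAt t h1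
    have hre : HasDerivAt (fun t => (u j t * (starRingEnd ℂ) (u j t)).re)
        ((deriv (u j) t * (starRingEnd ℂ) (u j t)
          + u j t * (starRingEnd ℂ) (deriv (u j) t)).re) t :=
      Complex.reCLM.hasFDerivAt.comp_hasDerivAt t h2
    exact (him.const_mul (ν^2 * m j)).add (hre.const_mul (ν * Real.sqrt ω * m j))
  -- integrability
  have hFint : ∀ j : Fin (n + 1), IntervalIntegrable (fun t =>
      ((-(ν : ℂ) ^ 2 * (m j : ℂ) * deriv (deriv (u j)) t
            - 2 * (ν : ℂ) * (m j : ℂ) * ((Real.sqrt ω : ℂ) * (Complex.I * deriv (u j) t))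
            + (ω : ℂ) * (m j : ℂ) * u j t
            - ∑ i ∈ Finset.univ.erase j,
                ((m i : ℂ) * (m j : ℂ) * (u j t - u i t)) / ((r i j t : ℂ)) ^ 3)
          * (starRingEnd ℂ) (-(Complex.I * u j t))).re)
      MeasureTheory.volume (0 : ℝ) (2 * Real.pi) :=
    fun j => (hFcont j).intervalIntegrable _ _
  rw [← intervalIntegral.integral_finset_sum (fun j _ => hFint j)]
  rw [intervalIntegral.integral_eq_sub_of_hasDerivAt (fun t _ => hG t)
    ((continuous_finset_sum _ (fun j _ => hFcont j)).intervalIntegrable _ _)]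
  have hGper : G (2 * Real.pi) = G 0 := by
    rw [hGdef]
    refine Finset.sum_congr rfl fun j _ => ?_
    have e1 : u j (2 * Real.pi) = u j 0 := by simpa using hup j 0
    have e2 : deriv (u j) (2 * Real.pi) = deriv (u j) 0 := by
      simpa using (nbody_aux_periodic_deriv (u j) _ (hup j)) 0
    rw [e1, e2]
  rw [hGper, sub_self]
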